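/- Let m ∈ ℕ and for n = 1,…,m let aₙ, bₙ ∈ ℂ and ωₙ ∈ ℝ. If the function f(t) = Σₙ [aₙ cos(ωₙ t) + bₙ sin(ωₙ t)] satisfies f(t) → 0 as t → ∞, then f(t) = 0 for all t ∈ ℝ. -/

import Mathlib

/-- `|cos(x+y) - cos x|` is controlled by `|e^{iy} - 1|`. -/
lemma cos_shift_le (x y : ℝ) :
    |Real.cos (x + y) - Real.cos x| ≤ ‖Complex.exp (y * Complex.I) - 1‖ := by
  have h1 : Real.cos (x + y) - Real.cos x =
      (Complex.exp (((x + y : ℝ) : ℂ) * Complex.I) -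
        Complex.exp ((x : ℝ) * Complex.I)).re := by
    simp only [Complex.sub_re, Complex.exp_ofReal_mul_I_re]
  rw [h1]
  refine (Complex.abs_re_le_norm _).trans ?_
  have h2 : Complex.exp (((x + y : ℝ) : ℂ) * Complex.I) - Complex.exp ((x : ℝ) * Complex.I)
      = Complex.exp ((x : ℝ) * Complex.I) * (Complex.exp ((y : ℝ) * Complex.I) - 1) := by
    rw [mul_sub, ← Complex.exp_add, mul_one]
    congr 1
    push_cast
    ring
  rw [h2, norm_mul, Complex.norm_exp_ofReal_mul_I, one_mul]

/-- `|sin(x+y) - sin x|` is controlled by `|e^{iy} - 1|`. -/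
lemma sin_shift_le (x y : ℝ) :
    |Real.sin (x + y) - Real.sin x| ≤ ‖Complex.exp (y * Complex.I) - 1‖ := by
  have h1 : Real.sin (x + y) - Real.sin x =
      (Complex.exp (((x + y : ℝ) : ℂ) * Complex.I) -
        Complex.exp ((x : ℝ) * Complex.I)).im := by
    simp only [Complex.sub_im, Complex.exp_ofReal_mul_I_im]
  rw [h1]
  refine (Complex.abs_im_le_norm _).trans ?_
  have h2 : Complex.exp (((x + y : ℝ) : ℂ) * Complex.I) - Complex.exp ((x : ℝ) * Complex.I)
      = Complex.exp ((x : ℝ) * Complex.I) * (Complex.exp ((y : ℝ) * Complex.I) - 1) := by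
    rw [mul_sub, ← Complex.exp_add, mul_one]
    congr 1
    push_cast
    ring
  rw [h2, norm_mul, Complex.norm_exp_ofReal_mul_I, one_mul]

/-- Recurrence: there are arbitrarily large integers `T` with `e^{iωₙT}` simultaneously
close to `1` for all `n ∈ [1, m]`. -/
lemma trig_recurrence (m : ℕ) (ω : ℕ → ℝ) {ε : ℝ} (hε : 0 < ε) (N : ℕ) :
    ∃ T : ℕ, N ≤ T ∧ ∀ n ∈ Finset.Icc 1 m,
      ‖Complex.exp (((ω n * T : ℝ) : ℂ) * Complex.I) - 1‖ < ε := by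
  set u : ℕ → (Fin m → ℂ) :=
    fun k i => Complex.exp (((ω (i + 1) * k : ℝ) : ℂ) * Complex.I) with hu
  have hmem : ∀ k, u k ∈ Metric.closedBall (0 : Fin m → ℂ) 1 := by
    intro k
    rw [Metric.mem_closedBall, dist_zero_right]
    refine (pi_norm_le_iff_of_nonneg zero_le_one).2 fun i => ?_
    have habs : ‖u k i‖ = 1 := Complex.norm_exp_ofReal_mul_I _
    simp [habs]
  obtain ⟨x, -, φ, hφ, hconv⟩ :=
    tendsto_subseq_of_bounded Metric.isBounded_closedBall hmem
  obtain ⟨j0, hj0⟩ := Metric.tendsto_atTop.1 hconv (ε / 2) (half_pos hε)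
  set j : ℕ := max j0 (φ j0 + N) with hjdef
  have hjge : j0 ≤ j := le_max_left _ _
  have hφj : φ j0 + N ≤ φ j := le_trans (le_max_right _ _) hφ.le_apply
  refine ⟨φ j - φ j0, by omega, fun n hn => ?_⟩
  obtain ⟨hn1, hn2⟩ := Finset.mem_Icc.1 hn
  set i : Fin m := ⟨n - 1, by omega⟩ with hi
  have hni : (i : ℕ) + 1 = n := by simp [hi]; omega
  have hcast : ((φ j - φ j0 : ℕ) : ℝ) = (φ j : ℝ) - (φ j0 : ℝ) := by
    have : φ j0 ≤ φ j := by omega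
    push_cast [this]
    ring
  have hmul : Complex.exp (((ω n * (φ j - φ j0 : ℕ) : ℝ) : ℂ) * Complex.I) *
      Complex.exp (((ω n * φ j0 : ℝ) : ℂ) * Complex.I)
      = Complex.exp (((ω n * φ j : ℝ) : ℂ) * Complex.I) := by
    rw [← Complex.exp_add]
    congr 1
    push_cast [hcast]
    ring
  have habs1 : ‖Complex.exp (((ω n * φ j0 : ℝ) : ℂ) * Complex.I)‖ = 1 :=
    Complex.norm_exp_ofReal_mul_I _
  have key : ‖Complex.exp (((ω n * (φ j - φ j0 : ℕ) : ℝ) : ℂ) * Complex.I) - 1‖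
      = ‖Complex.exp (((ω n * φ j : ℝ) : ℂ) * Complex.I) -
          Complex.exp (((ω n * φ j0 : ℝ) : ℂ) * Complex.I)‖ := by
    rw [← hmul]
    rw [show Complex.exp (((ω n * (φ j - φ j0 : ℕ) : ℝ) : ℂ) * Complex.I) *
          Complex.exp (((ω n * φ j0 : ℝ) : ℂ) * Complex.I) -
          Complex.exp (((ω n * φ j0 : ℝ) : ℂ) * Complex.I)
        = (Complex.exp (((ω n * (φ j - φ j0 : ℕ) : ℝ) : ℂ) * Complex.I) - 1) *
          Complex.exp (((ω n * φ j0 : ℝ) : ℂ) * Complex.I) by ring]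
    rw [norm_mul, habs1, mul_one]
  rw [key]
  have heq1 : Complex.exp (((ω n * φ j : ℝ) : ℂ) * Complex.I) = u (φ j) i := by
    simp [hu, hni]
  have heq2 : Complex.exp (((ω n * φ j0 : ℝ) : ℂ) * Complex.I) = u (φ j0) i := by
    simp [hu, hni]
  rw [heq1, heq2]
  calc ‖u (φ j) i - u (φ j0) i‖ = dist (u (φ j) i) (u (φ j0) i) :=
        (Complex.dist_eq _ _).symm
    _ ≤ dist (u (φ j)) (u (φ j0)) := dist_le_pi_dist _ _ _
    _ ≤ dist (u (φ j)) x + dist x (u (φ j0)) := dist_triangle _ _ _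
    _ < ε / 2 + ε / 2 := by
        have h1 := hj0 j hjge
        have h2 := hj0 j0 le_rfl
        rw [Function.comp] at h1 h2
        rw [dist_comm] at h2
        exact add_lt_add h1 h2
    _ = ε := add_halves ε

/-- If a finite complex linear combination of sinusoids tends to `0` at `+∞`,
then it vanishes identically. -/
theorem trig_poly_tendsto_zero_eq_zero
    (m : ℕ) (a b : ℕ → ℂ) (ω : ℕ → ℝ) (f : ℝ → ℂ)
    (hf : ∀ t : ℝ, f t =
      ∑ n ∈ Finset.Icc 1 m, (a n * Real.cos (ω n * t) + b n * Real.sin (ω n * t)))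
    (hlim : Filter.Tendsto f Filter.atTop (nhds 0)) :
    ∀ t : ℝ, f t = 0 := by
  intro t
  set C : ℝ := ∑ n ∈ Finset.Icc 1 m, (‖a n‖ + ‖b n‖) with hC
  have hC0 : 0 ≤ C :=
    Finset.sum_nonneg fun n _ => add_nonneg (norm_nonneg _) (norm_nonneg _)
  suffices h : ∀ δ : ℝ, 0 < δ → ‖f t‖ ≤ δ by
    have : ‖f t‖ ≤ 0 := le_of_forall_gt_imp_ge_of_dense fun δ hδ => h δ hδ
    exact norm_le_zero_iff.1 this
  intro δ hδ
  set ε : ℝ := δ / (2 * (C + 1)) with hε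
  have hεpos : 0 < ε := div_pos hδ (by nlinarith)
  obtain ⟨N, hN⟩ := Metric.tendsto_atTop.1 hlim (δ / 2) (half_pos hδ)
  obtain ⟨T, hT1, hT2⟩ := trig_recurrence m ω hεpos ⌈N - t⌉₊
  have htT : N ≤ t + T := by
    have h1 : N - t ≤ (⌈N - t⌉₊ : ℝ) := Nat.le_ceil _
    have h2 : ((⌈N - t⌉₊ : ℕ) : ℝ) ≤ (T : ℝ) := Nat.cast_le.2 hT1
    linarith
  have hfT : ‖f (t + T)‖ < δ / 2 := by
    have := hN (t + T) htT
    rwa [dist_zero_right] at this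
  have hdiff : ‖f t - f (t + T)‖ ≤ C * ε := by
    rw [hf t, hf (t + T), ← Finset.sum_sub_distrib]
    refine (norm_sum_le _ _).trans ?_
    rw [hC, Finset.sum_mul]
    refine Finset.sum_le_sum fun n hn => ?_
    have hcos : ‖((Real.cos (ω n * t) : ℂ)) - ((Real.cos (ω n * (t + T)) : ℂ))‖ ≤ ε := by
      rw [← Complex.ofReal_sub, Complex.norm_real, Real.norm_eq_abs, abs_sub_comm]
      have := cos_shift_le (ω n * t) (ω n * T)
      rw [show ω n * t + ω n * T = ω n * (t + T) by ring] at this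
      exact this.trans (hT2 n hn).le
    have hsin : ‖((Real.sin (ω n * t) : ℂ)) - ((Real.sin (ω n * (t + T)) : ℂ))‖ ≤ ε := by
      rw [← Complex.ofReal_sub, Complex.norm_real, Real.norm_eq_abs, abs_sub_comm]
      have := sin_shift_le (ω n * t) (ω n * T)
      rw [show ω n * t + ω n * T = ω n * (t + T) by ring] at this
      exact this.trans (hT2 n hn).le
    calc ‖a n * Real.cos (ω n * t) + b n * Real.sin (ω n * t) -
          (a n * Real.cos (ω n * (t + T)) + b n * Real.sin (ω n * (t + T)))‖
        = ‖a n * ((Real.cos (ω n * t) : ℂ) - (Real.cos (ω n * (t + T)) : ℂ)) +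
            b n * ((Real.sin (ω n * t) : ℂ) - (Real.sin (ω n * (t + T)) : ℂ))‖ := by
          ring_nf
      _ ≤ ‖a n * ((Real.cos (ω n * t) : ℂ) - (Real.cos (ω n * (t + T)) : ℂ))‖ +
            ‖b n * ((Real.sin (ω n * t) : ℂ) - (Real.sin (ω n * (t + T)) : ℂ))‖ :=
          norm_add_le _ _
      _ = ‖a n‖ * ‖((Real.cos (ω n * t) : ℂ) - (Real.cos (ω n * (t + T)) : ℂ))‖ +
            ‖b n‖ * ‖((Real.sin (ω n * t) : ℂ) - (Real.sin (ω n * (t + T)) : ℂ))‖ := by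
          rw [norm_mul, norm_mul]
      _ ≤ ‖a n‖ * ε + ‖b n‖ * ε := by
          exact add_le_add (mul_le_mul_of_nonneg_left hcos (norm_nonneg _))
            (mul_le_mul_of_nonneg_left hsin (norm_nonneg _))
      _ = (‖a n‖ + ‖b n‖) * ε := by
          ring
  have hCε : C * ε ≤ δ / 2 := by
    have h2 : (0:ℝ) < 2 * (C + 1) := by nlinarith
    rw [hε, ← mul_div_assoc, div_le_div_iff₀ h2 two_pos]
    nlinarith
  calc ‖f t‖ = ‖(f t - f (t + T)) + f (t + T)‖ := by
        rw [show f t - f (t + (T:ℝ)) + f (t + (T:ℝ)) = f t by ring]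
    _ ≤ ‖f t - f (t + T)‖ + ‖f (t + T)‖ := norm_add_le _ _
    _ ≤ C * ε + δ / 2 := add_le_add hdiff hfT.le
    _ ≤ δ / 2 + δ / 2 := add_le_add_left hCε _
    _ = δ := add_halves δ
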